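/- arXiv:2109.01791 — 3 statements merged into one kernel-verified Lean document; each statement's English description precedes it below -/
import Mathlib

section
/- Let $\phi \in L^1(\mathbb{R})$ with $\int_{\mathbb{R}} |x|^\sigma |\phi(x)|\,dx < \infty$ for some $\sigma > 0$. Let $(x_n), (y_n)$ be sequences with $x_n > y_n$, $y_n \to +\infty$, and $x_n/y_n \to 1$. Then $\lim_{n\to\infty} \frac{1}{2x_n} \int_{-y_n}^{x_n} \int_{-y_n+y}^{x_n+y} \phi(x)\,dx\,dy = \int_{\mathbb{R}} \phi(x)\,dx$. -/
open MeasureTheory Filter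

lemma key_swap (φ : ℝ → ℝ) (hφ : Integrable φ) (a b : ℝ) :
    (∫ s in Set.Ioo a b, ∫ t in Set.Ioo (a + s) (b + s), φ t)
      = ∫ t, (max (min b (t - a) - max a (t - b)) 0) * φ t := by
  have hb : MeasurableSet {p : ℝ × ℝ | a + p.1 < p.2 ∧ p.2 < b + p.1} :=
    (measurableSet_lt (measurable_const.add measurable_fst) measurable_snd).inter
      (measurableSet_lt measurable_snd (measurable_const.add measurable_fst))
  set F : ℝ → ℝ → ℝ := fun s t => (Set.Ioo (a + s) (b + s)).indicator φ t with hFdef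
  have hFe : Function.uncurry F =
      {p : ℝ × ℝ | a + p.1 < p.2 ∧ p.2 < b + p.1}.indicator (fun p => φ p.2) := by
    ext p
    rcases p with ⟨s, t⟩
    by_cases h : a + s < t ∧ t < b + s <;>
      simp [F, Function.uncurry, Set.indicator, Set.mem_Ioo, h]
  have hμfin : IsFiniteMeasure (volume.restrict (Set.Ioo a b)) := by
    constructor
    rw [Measure.restrict_apply_univ, Real.volume_Ioo]
    exact ENNReal.ofReal_lt_top
  have hint2 : Integrable (fun p : ℝ × ℝ => φ p.2)
      ((volume.restrict (Set.Ioo a b)).prod volume) := by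
    have := (integrable_const (μ := volume.restrict (Set.Ioo a b)) (1 : ℝ)).mul_prod hφ
    simpa using this
  have hFint : Integrable (Function.uncurry F)
      ((volume.restrict (Set.Ioo a b)).prod volume) := by
    rw [hFe]; exact hint2.indicator hb
  have hswap := integral_integral_swap hFint
  have hL : (∫ s in Set.Ioo a b, ∫ t, F s t)
      = ∫ s in Set.Ioo a b, ∫ t in Set.Ioo (a + s) (b + s), φ t := by
    refine setIntegral_congr_fun measurableSet_Ioo fun s _ => ?_
    rw [hFdef]
    exact integral_indicator measurableSet_Ioo
  have hR : (∫ t, ∫ s in Set.Ioo a b, F s t)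
      = ∫ t, (max (min b (t - a) - max a (t - b)) 0) * φ t := by
    refine integral_congr_ae (Filter.Eventually.of_forall fun t => ?_)
    have h1 : ∀ s, F s t = (Set.Ioo (t - b) (t - a)).indicator (fun _ => φ t) s := by
      intro s
      by_cases h : a + s < t ∧ t < b + s
      · rw [hFdef]
        simp only [Set.indicator, Set.mem_Ioo]
        rw [if_pos h, if_pos ⟨by linarith [h.2], by linarith [h.1]⟩]
      · rw [hFdef]
        simp only [Set.indicator, Set.mem_Ioo]
        rw [if_neg h, if_neg]
        intro ⟨h1, h2⟩
        exact h ⟨by linarith, by linarith⟩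
    calc (∫ s in Set.Ioo a b, F s t)
        = ∫ s in Set.Ioo a b, (Set.Ioo (t - b) (t - a)).indicator (fun _ => φ t) s := by
          simp only [h1]
      _ = ∫ s in Set.Ioo a b ∩ Set.Ioo (t - b) (t - a), φ t :=
          setIntegral_indicator measurableSet_Ioo
      _ = (volume (Set.Ioo a b ∩ Set.Ioo (t - b) (t - a))).toReal * φ t := by
          rw [setIntegral_const]; rfl
      _ = (max (min b (t - a) - max a (t - b)) 0) * φ t := by
          rw [Set.Ioo_inter_Ioo, Real.volume_Ioo, ENNReal.toReal_ofReal']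
  rw [← hL, ← hR]
  exact hswap

/-- Averaged-translation representation lemma: for `φ ∈ L¹(ℝ)` with a finite
`σ`-moment, averages of translates over growing windows converge to `∫ φ`. -/
theorem stmt0 (φ : ℝ → ℝ) (σ : ℝ) (hσ : 0 < σ)
    (hφ : Integrable φ)
    (hmom : Integrable (fun x => |x| ^ σ * |φ x|))
    (x y : ℕ → ℝ)
    (hxy : ∀ n, y n < x n)
    (hy : Tendsto y atTop atTop)
    (hratio : Tendsto (fun n => x n / y n) atTop (nhds 1)) :
    Tendsto (fun n => (1 / (2 * x n)) *
        ∫ s in Set.Ioc (-(y n)) (x n), (∫ t in Set.Ioc (-(y n) + s) (x n + s), φ t))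
      atTop (nhds (∫ t, φ t)) := by
  have hx : Tendsto x atTop atTop := tendsto_atTop_mono (fun n => (hxy n).le) hy
  set W : ℕ → ℝ → ℝ :=
    fun n t => max (min (x n) (t - -(y n)) - max (-(y n)) (t - x n)) 0 with hWdef
  have hrw : ∀ n, (∫ s in Set.Ioc (-(y n)) (x n), ∫ t in Set.Ioc (-(y n) + s) (x n + s), φ t)
      = ∫ t, W n t * φ t := by
    intro n
    rw [← key_swap φ hφ (-(y n)) (x n)]
    simp only [MeasureTheory.integral_Ioc_eq_integral_Ioo]
  -- positivity eventualities
  have hxpos : ∀ᶠ n in atTop, 0 < x n := hx.eventually_gt_atTop 0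
  -- bound: |W n t / (2 * x n)| ≤ 1
  have hbnd : ∀ n t, |W n t / (2 * x n)| ≤ 1 := by
    intro n t
    rcases le_or_gt (min (x n) (t - -(y n)) - max (-(y n)) (t - x n)) 0 with h | h
    · rw [hWdef]; simp only [max_eq_right h, zero_div, abs_zero]; norm_num
    · have h1 : min (x n) (t - -(y n)) - max (-(y n)) (t - x n) ≤ x n + y n := by
        have h2 := min_le_left (x n) (t - -(y n))
        have h3 := le_max_left (-(y n)) (t - x n)
        linarith
      have h2 : 0 < x n + y n := lt_of_lt_of_le h h1
      have hx0 : 0 < x n := by linarith [hxy n]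
      have hW : W n t = min (x n) (t - -(y n)) - max (-(y n)) (t - x n) := by
        rw [hWdef]; exact max_eq_left h.le
      rw [abs_div, abs_of_pos (by rw [hW]; exact h), abs_of_pos (by linarith : (0:ℝ) < 2 * x n),
        div_le_one (by linarith)]
      rw [hW]; linarith [hxy n]
  -- pointwise limit
  have hyx : Tendsto (fun n => y n / x n) atTop (nhds 1) := by
    have := hratio.inv₀ one_ne_zero
    simpa [inv_div] using this
  have h2x : Tendsto (fun n => 2 * x n) atTop atTop :=
    (tendsto_const_mul_atTop_of_pos (by norm_num)).mpr hx
  have hinv : Tendsto (fun n => (2 * x n)⁻¹) atTop (nhds 0) := h2x.inv_tendsto_atTop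
  have hlim : ∀ t, Tendsto (fun n => W n t / (2 * x n)) atTop (nhds 1) := by
    intro t
    have hA : Tendsto (fun n => (t - -(y n)) / (2 * x n)) atTop (nhds (1/2)) := by
      have h1 := (hinv.const_mul t).add (hyx.div_const 2)
      rw [mul_zero, zero_add] at h1
      refine h1.congr' ?_
      filter_upwards [hxpos] with n hn
      field_simp
      ring
    have hhalf : Tendsto (fun n => x n / (2 * x n)) atTop (nhds (1/2)) := by
      refine tendsto_const_nhds.congr' ?_
      filter_upwards [hxpos] with n hn
      field_simp
    have hB : Tendsto (fun n => -(y n) / (2 * x n)) atTop (nhds (-(1/2))) := by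
      have h1 : Tendsto (fun n => -((y n / x n) / 2)) atTop (nhds (-(1/2))) :=
        (hyx.div_const 2).neg
      refine h1.congr' ?_
      filter_upwards [hxpos] with n hn
      field_simp
    have hC : Tendsto (fun n => (t - x n) / (2 * x n)) atTop (nhds (-(1/2))) := by
      have h1 : Tendsto (fun n => t * (2 * x n)⁻¹ - x n / (2 * x n)) atTop
          (nhds (0 - 1/2)) := by
        have := (hinv.const_mul t).sub hhalf
        rw [mul_zero] at this
        exact this
      have h2 : (0 : ℝ) - 1/2 = -(1/2) := by norm_num
      rw [h2] at h1
      refine h1.congr fun n => ?_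
      rw [sub_div]
      ring
    have hmain : Tendsto
        (fun n => min (x n / (2 * x n)) ((t - -(y n)) / (2 * x n))
          - max (-(y n) / (2 * x n)) ((t - x n) / (2 * x n))) atTop (nhds 1) := by
      have := (hhalf.min hA).sub (hB.max hC)
      norm_num at this
      convert this using 2
      norm_num
    have : Tendsto (fun n => max (min (x n / (2 * x n)) ((t - -(y n)) / (2 * x n))
          - max (-(y n) / (2 * x n)) ((t - x n) / (2 * x n))) 0) atTop (nhds (max 1 0)) :=
      hmain.max tendsto_const_nhds
    rw [max_eq_left (by norm_num : (0:ℝ) ≤ 1)] at this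
    refine this.congr' ?_
    filter_upwards [hxpos] with n hn
    have h2 : (0 : ℝ) ≤ 2 * x n := by linarith
    rw [hWdef]
    rw [min_div_div_right h2, max_div_div_right h2, ← sub_div,
      ← max_div_div_right h2, zero_div]
  -- dominated convergence
  have hmain : Tendsto (fun n => ∫ t, (W n t / (2 * x n)) * φ t) atTop
      (nhds (∫ t, φ t)) := by
    refine tendsto_integral_of_dominated_convergence (fun t => |φ t|) ?_ hφ.abs ?_ ?_
    · intro n
      refine AEStronglyMeasurable.mul ?_ hφ.1
      refine Continuous.aestronglyMeasurable ?_
      apply Continuous.div_const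
      rw [hWdef]
      fun_prop
    · intro n
      refine Filter.Eventually.of_forall fun t => ?_
      rw [Real.norm_eq_abs, abs_mul]
      calc |W n t / (2 * x n)| * |φ t| ≤ 1 * |φ t| :=
            mul_le_mul_of_nonneg_right (hbnd n t) (abs_nonneg _)
        _ = |φ t| := one_mul _
    · refine Filter.Eventually.of_forall fun t => ?_
      have := (hlim t).mul_const (φ t)
      rw [one_mul] at this
      exact this
  refine hmain.congr fun n => ?_
  rw [hrw n, ← integral_const_mul]
  congr 1
  funext t
  ring
end

section
/- Let $E$ be a normed vector space with dual $E^*$, and let $f, g : E \to \mathbb{R}\cup\{+\infty\}$ be convex. Suppose there exists $x_0 \in E$ with $f(x_0) < \infty$, $g(x_0) < \infty$, and $f$ continuous at $x_0$. Then $\inf_{x \in E} (f(x) + g(x)) = \max_{y \in E^*} (-f^*(-y) - g^*(y))$, where the maximum on the right is attained. -/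
open Filter

/-- The Legendre–Fenchel conjugate of an `ℝ ∪ {+∞}`-valued function on a normed
space, evaluated at a continuous linear functional. -/
noncomputable def eConj {E : Type*} [NormedAddCommGroup E] [NormedSpace ℝ E]
    (f : E → EReal) (y : E →L[ℝ] ℝ) : EReal :=
  ⨆ x : E, ((y x : ℝ) : EReal) - f x

lemma aux_le_on_self {F : Type*} [NormedAddCommGroup F] [NormedSpace ℝ F]
    {S : Set F} (hS : Convex ℝ S) {z : F} (hz : z ∈ interior S)
    (φ : F →L[ℝ] ℝ) (u : ℝ) (hlt : ∀ a ∈ interior S, φ a < u) :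
    ∀ p ∈ S, φ p ≤ u := by
  intro p hp
  refine le_of_forall_pos_le_add fun ε hε => ?_
  set D : ℝ := |φ p - φ z| with hD
  have hD1 : 0 < D + 1 := by positivity
  set t : ℝ := min (1/2) (ε / (D + 1)) with ht
  have ht0 : 0 < t := lt_min (by norm_num) (by positivity)
  have ht1 : t ≤ 1/2 := min_le_left _ _
  have hmem : t • z + (1 - t) • p ∈ interior S :=
    hS.combo_interior_self_mem_interior hz hp ht0 (by linarith) (by ring)
  have h1 : t * φ z + (1 - t) * φ p < u := by
    have := hlt _ hmem
    simpa [map_add, map_smul, smul_eq_mul] using this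
  have h2 : t * (φ p - φ z) ≤ t * D := mul_le_mul_of_nonneg_left (le_abs_self _) ht0.le
  have h3 : t * D < ε := by
    have htD : t ≤ ε / (D + 1) := min_le_right _ _
    have hDnn : 0 ≤ D := abs_nonneg _
    calc t * D ≤ (ε / (D + 1)) * D := mul_le_mul_of_nonneg_right htD hDnn
      _ < ε := by
        rw [div_mul_eq_mul_div, div_lt_iff₀ hD1]
        nlinarith
  nlinarith

/-- Fenchel–Rockafellar duality: for convex `f, g : E → ℝ ∪ {+∞}` on a normed
space, finite at a common point `x₀` where `f` is continuous,
`inf_x (f + g) = max_y (-f*(-y) - g*(y))`, the maximum being attained. -/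
theorem stmt11 (E : Type*) [NormedAddCommGroup E] [NormedSpace ℝ E]
    (f g : E → EReal)
    (hfbot : ∀ x, f x ≠ ⊥) (hgbot : ∀ x, g x ≠ ⊥)
    (hfconv : ∀ x y : E, ∀ a b : ℝ, 0 ≤ a → 0 ≤ b → a + b = 1 →
      f (a • x + b • y) ≤ (a : EReal) * f x + (b : EReal) * f y)
    (hgconv : ∀ x y : E, ∀ a b : ℝ, 0 ≤ a → 0 ≤ b → a + b = 1 →
      g (a • x + b • y) ≤ (a : EReal) * g x + (b : EReal) * g y)
    (x₀ : E) (hfx₀ : f x₀ < ⊤) (hgx₀ : g x₀ < ⊤)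
    (hcont : ContinuousAt f x₀) :
    (⨅ x : E, f x + g x) = (⨆ y : E →L[ℝ] ℝ, (-(eConj f (-y)) - eConj g y)) ∧
      ∃ y : E →L[ℝ] ℝ, -(eConj f (-y)) - eConj g y = ⨅ x : E, f x + g x := by
  classical
  set m : EReal := ⨅ x : E, f x + g x with hmdef
  have hmle : ∀ x : E, m ≤ f x + g x := fun x => iInf_le _ x
  obtain ⟨fr₀, hfr₀⟩ : ∃ r : ℝ, f x₀ = (r : EReal) :=
    ⟨_, (EReal.coe_toReal hfx₀.ne (hfbot x₀)).symm⟩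
  obtain ⟨gr₀, hgr₀⟩ : ∃ r : ℝ, g x₀ = (r : EReal) :=
    ⟨_, (EReal.coe_toReal hgx₀.ne (hgbot x₀)).symm⟩
  have hmtop : m ≠ ⊤ := by
    refine ne_top_of_le_ne_top ?_ (hmle x₀)
    rw [hfr₀, hgr₀, ← EReal.coe_add]
    exact EReal.coe_ne_top _
  -- weak duality
  have hWD : ∀ y : E →L[ℝ] ℝ, -(eConj f (-y)) - eConj g y ≤ m := by
    intro y
    refine le_iInf fun x => ?_
    by_cases hfx : f x = ⊤
    · rw [hfx, EReal.top_add_of_ne_bot (hgbot x)]; exact le_top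
    by_cases hgx : g x = ⊤
    · rw [hgx, EReal.add_top_of_ne_bot (hfbot x)]; exact le_top
    obtain ⟨fx, hfx'⟩ : ∃ r : ℝ, f x = (r : EReal) :=
      ⟨_, (EReal.coe_toReal hfx (hfbot x)).symm⟩
    obtain ⟨gx, hgx'⟩ : ∃ r : ℝ, g x = (r : EReal) :=
      ⟨_, (EReal.coe_toReal hgx (hgbot x)).symm⟩
    by_cases hA : eConj f (-y) = ⊤
    · rw [hA, EReal.neg_top, EReal.bot_sub]; exact bot_le
    by_cases hB : eConj g y = ⊤
    · rw [hB, EReal.sub_top]; exact bot_le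
    have hA1 : ((((-y) x : ℝ)) : EReal) - f x ≤ eConj f (-y) :=
      le_iSup (fun x' => (((-y) x' : ℝ) : EReal) - f x') x
    have hB1 : (((y x : ℝ)) : EReal) - g x ≤ eConj g y :=
      le_iSup (fun x' => ((y x' : ℝ) : EReal) - g x') x
    rw [hfx'] at hA1
    rw [hgx'] at hB1
    rw [← EReal.coe_sub] at hA1 hB1
    have hAbot : eConj f (-y) ≠ ⊥ := fun h => by
      rw [h] at hA1; exact (EReal.coe_ne_bot _ (le_bot_iff.1 hA1))
    have hBbot : eConj g y ≠ ⊥ := fun h => by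
      rw [h] at hB1; exact (EReal.coe_ne_bot _ (le_bot_iff.1 hB1))
    obtain ⟨ar, har⟩ : ∃ r : ℝ, eConj f (-y) = (r : EReal) :=
      ⟨_, (EReal.coe_toReal hA hAbot).symm⟩
    obtain ⟨br, hbr⟩ : ∃ r : ℝ, eConj g y = (r : EReal) :=
      ⟨_, (EReal.coe_toReal hB hBbot).symm⟩
    rw [har] at hA1
    rw [hbr] at hB1
    rw [EReal.coe_le_coe_iff] at hA1 hB1
    rw [har, hbr, hfx', hgx']
    have hyx : (-y) x = -(y x) := rfl
    rw [hyx] at hA1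
    have : -ar - br ≤ fx + gx := by linarith
    exact_mod_cast this
  by_cases hmbot : m = ⊥
  · refine ⟨?_, 0, ?_⟩
    · rw [hmbot]
      refine (le_antisymm bot_le (iSup_le fun y => ?_))
      rw [← hmbot]; exact hWD y
    · rw [hmbot]
      exact le_bot_iff.1 (hmbot ▸ hWD 0)
  obtain ⟨mr, hmr⟩ : ∃ r : ℝ, m = (r : EReal) := ⟨_, (EReal.coe_toReal hmtop hmbot).symm⟩
  -- the two convex sets
  set S : Set (E × ℝ) := {p | f p.1 ≤ (p.2 : EReal)} with hSdef
  set B : Set (E × ℝ) := {p | (p.2 : EReal) + g p.1 ≤ m} with hBdef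
  have hconvS : Convex ℝ S := by
    rw [convex_iff_forall_pos]
    rintro p hp q hq a b ha hb hab
    have hp' : f p.1 ≤ (p.2 : EReal) := hp
    have hq' : f q.1 ≤ (q.2 : EReal) := hq
    obtain ⟨fp, hfp⟩ : ∃ r : ℝ, f p.1 = (r : EReal) :=
      ⟨_, (EReal.coe_toReal (hp'.trans_lt (EReal.coe_lt_top _)).ne (hfbot _)).symm⟩
    obtain ⟨fq, hfq⟩ : ∃ r : ℝ, f q.1 = (r : EReal) :=
      ⟨_, (EReal.coe_toReal (hq'.trans_lt (EReal.coe_lt_top _)).ne (hfbot _)).symm⟩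
    rw [hfp, EReal.coe_le_coe_iff] at hp'
    rw [hfq, EReal.coe_le_coe_iff] at hq'
    show f (a • p + b • q).1 ≤ (((a • p + b • q).2 : ℝ) : EReal)
    have h1 : (a • p + b • q).1 = a • p.1 + b • q.1 := rfl
    have h2 : (a • p + b • q).2 = a * p.2 + b * q.2 := rfl
    rw [h1, h2]
    calc f (a • p.1 + b • q.1) ≤ (a : EReal) * f p.1 + (b : EReal) * f q.1 :=
          hfconv _ _ a b ha.le hb.le hab
      _ = (((a * fp + b * fq : ℝ)) : EReal) := by rw [hfp, hfq]; norm_cast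
      _ ≤ (((a * p.2 + b * q.2 : ℝ)) : EReal) := by
          rw [EReal.coe_le_coe_iff]
          nlinarith
  have hconvB : Convex ℝ B := by
    rw [convex_iff_forall_pos]
    rintro p hp q hq a b ha hb hab
    have hp' : (p.2 : EReal) + g p.1 ≤ m := hp
    have hq' : (q.2 : EReal) + g q.1 ≤ m := hq
    have hgp_top : g p.1 ≠ ⊤ := by
      intro h; rw [h, EReal.add_top_of_ne_bot (EReal.coe_ne_bot _)] at hp'
      exact hmtop (top_le_iff.1 hp')
    have hgq_top : g q.1 ≠ ⊤ := by
      intro h; rw [h, EReal.add_top_of_ne_bot (EReal.coe_ne_bot _)] at hq'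
      exact hmtop (top_le_iff.1 hq')
    obtain ⟨gp, hgp⟩ : ∃ r : ℝ, g p.1 = (r : EReal) :=
      ⟨_, (EReal.coe_toReal hgp_top (hgbot _)).symm⟩
    obtain ⟨gq, hgq⟩ : ∃ r : ℝ, g q.1 = (r : EReal) :=
      ⟨_, (EReal.coe_toReal hgq_top (hgbot _)).symm⟩
    rw [hgp, hmr, ← EReal.coe_add, EReal.coe_le_coe_iff] at hp'
    rw [hgq, hmr, ← EReal.coe_add, EReal.coe_le_coe_iff] at hq'
    show (((a • p + b • q).2 : ℝ) : EReal) + g (a • p + b • q).1 ≤ m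
    have h1 : (a • p + b • q).1 = a • p.1 + b • q.1 := rfl
    have h2 : (a • p + b • q).2 = a * p.2 + b * q.2 := rfl
    rw [h1, h2]
    calc ((a * p.2 + b * q.2 : ℝ) : EReal) + g (a • p.1 + b • q.1)
        ≤ ((a * p.2 + b * q.2 : ℝ) : EReal) + ((a : EReal) * g p.1 + (b : EReal) * g q.1) :=
          add_le_add le_rfl (hgconv _ _ a b ha.le hb.le hab)
      _ = (((a * p.2 + b * q.2) + (a * gp + b * gq) : ℝ) : EReal) := by
          rw [hgp, hgq]; norm_cast
      _ ≤ (mr : EReal) := by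
          rw [EReal.coe_le_coe_iff]
          have h5 : a * mr + b * mr = mr := by rw [← add_mul, hab, one_mul]
          nlinarith [mul_le_mul_of_nonneg_left hp' ha.le, mul_le_mul_of_nonneg_left hq' hb.le, h5]
      _ = m := hmr.symm
  have hIntS : ∀ r : ℝ, f x₀ < (r : EReal) → (x₀, r) ∈ interior S := by
    intro r hr
    have h1 : ContinuousAt (fun p : E × ℝ => f p.1) (x₀, r) := hcont.comp continuousAt_fst
    have h2 : ContinuousAt (fun p : E × ℝ => ((p.2 : ℝ) : EReal)) (x₀, r) :=
      (continuous_coe_real_ereal.comp continuous_snd).continuousAt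
    have h3 := h1.eventually_lt h2 hr
    exact mem_interior_iff_mem_nhds.2 (Filter.mem_of_superset h3
      fun p hp => show f p.1 ≤ (p.2 : EReal) from le_of_lt hp)
  have hIntStrict : ∀ p ∈ interior S, f p.1 < (p.2 : EReal) := by
    intro p hp
    obtain ⟨ε, hε, hball⟩ := Metric.isOpen_iff.1 isOpen_interior p hp
    have hqball : ((p.1, p.2 - ε / 2) : E × ℝ) ∈ Metric.ball p ε := by
      rw [Metric.mem_ball, Prod.dist_eq]
      simp only [dist_self, Real.dist_eq]
      have habs : |p.2 - ε / 2 - p.2| = ε / 2 := by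
        rw [show p.2 - ε / 2 - p.2 = -(ε / 2) by ring, abs_neg, abs_of_nonneg (by linarith)]
      rw [habs, sup_lt_iff]
      constructor <;> linarith
    have hq : ((p.1, p.2 - ε / 2) : E × ℝ) ∈ S := interior_subset (hball hqball)
    have hq' : f p.1 ≤ ((p.2 - ε / 2 : ℝ) : EReal) := hq
    refine hq'.trans_lt ?_
    rw [EReal.coe_lt_coe_iff]
    linarith
  have hz₀ : ((x₀, fr₀ + 1) : E × ℝ) ∈ interior S := by
    refine hIntS (fr₀ + 1) ?_
    rw [hfr₀, EReal.coe_lt_coe_iff]; linarith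
  have hdisj : Disjoint (interior S) B := by
    rw [Set.disjoint_left]
    intro p hpS hpB
    have h1 := hIntStrict p hpS
    obtain ⟨fp, hfp⟩ : ∃ r : ℝ, f p.1 = (r : EReal) :=
      ⟨_, (EReal.coe_toReal (h1.trans (EReal.coe_lt_top _)).ne (hfbot _)).symm⟩
    have hpB' : (p.2 : EReal) + g p.1 ≤ m := hpB
    have hgp_top : g p.1 ≠ ⊤ := by
      intro h; rw [h, EReal.add_top_of_ne_bot (EReal.coe_ne_bot _)] at hpB'
      exact hmtop (top_le_iff.1 hpB')
    obtain ⟨gp, hgp⟩ : ∃ r : ℝ, g p.1 = (r : EReal) :=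
      ⟨_, (EReal.coe_toReal hgp_top (hgbot _)).symm⟩
    have h2 := hmle p.1
    rw [hfp, hgp, hmr, ← EReal.coe_add, EReal.coe_le_coe_iff] at h2
    rw [hfp, EReal.coe_lt_coe_iff] at h1
    rw [hgp, hmr, ← EReal.coe_add, EReal.coe_le_coe_iff] at hpB'
    linarith
  obtain ⟨φ, u, hAφ, hBφ⟩ :=
    geometric_hahn_banach_open (hconvS.interior) isOpen_interior hconvB hdisj
  set L : E →L[ℝ] ℝ := φ.comp (ContinuousLinearMap.inl ℝ E ℝ) with hLdef
  set c : ℝ := φ (0, 1) with hcdef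
  have hφeq : ∀ (x : E) (t : ℝ), φ (x, t) = L x + t * c := by
    intro x t
    have hsplit : ((x, t) : E × ℝ) = (x, 0) + t • ((0 : E), (1 : ℝ)) := by
      simp [Prod.ext_iff]
    rw [hsplit, map_add, map_smul, smul_eq_mul]
    rfl
  have hSφ : ∀ p ∈ S, φ p ≤ u :=
    aux_le_on_self hconvS hz₀ φ u hAφ
  have hcneg : c < 0 := by
    rcases lt_or_ge c 0 with h | h
    · exact h
    exfalso
    rcases eq_or_lt_of_le h with h0 | h0
    · -- c = 0
      have hx₀B : ((x₀, mr - gr₀) : E × ℝ) ∈ B := by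
        show ((mr - gr₀ : ℝ) : EReal) + g x₀ ≤ m
        rw [hgr₀, ← EReal.coe_add, hmr, EReal.coe_le_coe_iff]; linarith
      have hu1 := hBφ _ hx₀B
      have hu2 := hAφ _ hz₀
      rw [hφeq] at hu1 hu2
      rw [← h0] at hu1 hu2
      simp at hu1 hu2
      linarith
    · -- c > 0
      set r : ℝ := max (fr₀ + 1) ((u - L x₀) / c + 1) with hrdef
      have hrin : ((x₀, r) : E × ℝ) ∈ interior S := by
        refine hIntS r ?_
        rw [hfr₀, EReal.coe_lt_coe_iff]
        calc fr₀ < fr₀ + 1 := by linarith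
          _ ≤ r := le_max_left _ _
      have := hAφ _ hrin
      rw [hφeq] at this
      have hr2 : (u - L x₀) / c + 1 ≤ r := le_max_right _ _
      have h4 : L x₀ + r * c < u := this
      nlinarith [mul_le_mul_of_nonneg_right hr2 h0.le, div_mul_cancel₀ (u - L x₀) h0.ne']
  set lam : ℝ := -c with hlamdef
  have hlam : 0 < lam := by simp [hlamdef]; linarith
  set Y : E →L[ℝ] ℝ := lam⁻¹ • L with hYdef
  have hYx : ∀ x : E, Y x = lam⁻¹ * L x := fun x => rfl
  -- conjugate bound for f
  have hF : eConj f Y ≤ ((u / lam : ℝ) : EReal) := by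
    refine iSup_le fun x => ?_
    by_cases hfx : f x = ⊤
    · rw [hfx, EReal.sub_top]; exact bot_le
    obtain ⟨fx, hfx'⟩ : ∃ r : ℝ, f x = (r : EReal) :=
      ⟨_, (EReal.coe_toReal hfx (hfbot x)).symm⟩
    have hmemS : ((x, fx) : E × ℝ) ∈ S := by
      show f x ≤ ((fx : ℝ) : EReal); rw [hfx']
    have h1 := hSφ _ hmemS
    rw [hφeq] at h1
    rw [hfx', ← EReal.coe_sub, EReal.coe_le_coe_iff, hYx]
    have hinv : 0 < lam⁻¹ := inv_pos.2 hlam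
    have hlc : lam * lam⁻¹ = 1 := mul_inv_cancel₀ hlam.ne'
    have hcl : c = -lam := by rw [hlamdef]; ring
    rw [hcl] at h1
    rw [div_eq_mul_inv]
    have h2 : (L x - fx * lam) * lam⁻¹ ≤ u * lam⁻¹ :=
      mul_le_mul_of_nonneg_right (by linarith) hinv.le
    have h3 : (L x - fx * lam) * lam⁻¹ = lam⁻¹ * L x - fx * (lam * lam⁻¹) := by ring
    rw [h3, hlc, mul_one] at h2
    linarith
  -- conjugate bound for g
  have hG : eConj g (-Y) ≤ ((-(u / lam) - mr : ℝ) : EReal) := by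
    refine iSup_le fun x => ?_
    by_cases hgx : g x = ⊤
    · rw [hgx, EReal.sub_top]; exact bot_le
    obtain ⟨gx, hgx'⟩ : ∃ r : ℝ, g x = (r : EReal) :=
      ⟨_, (EReal.coe_toReal hgx (hgbot x)).symm⟩
    have hmemB : ((x, mr - gx) : E × ℝ) ∈ B := by
      show ((mr - gx : ℝ) : EReal) + g x ≤ m
      rw [hgx', ← EReal.coe_add, hmr, EReal.coe_le_coe_iff]; linarith
    have h1 := hBφ _ hmemB
    rw [hφeq] at h1
    have hYnx : (-Y) x = -(lam⁻¹ * L x) := by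
      rw [ContinuousLinearMap.neg_apply, hYx]
    rw [hgx', ← EReal.coe_sub, EReal.coe_le_coe_iff, hYnx]
    have hinv : 0 < lam⁻¹ := inv_pos.2 hlam
    have hlc : lam * lam⁻¹ = 1 := mul_inv_cancel₀ hlam.ne'
    have hcl : c = -lam := by rw [hlamdef]; ring
    rw [hcl] at h1
    rw [div_eq_mul_inv]
    have h2 : u * lam⁻¹ ≤ (L x + (mr - gx) * -lam) * lam⁻¹ :=
      mul_le_mul_of_nonneg_right h1 hinv.le
    have h3 : (L x + (mr - gx) * -lam) * lam⁻¹
        = lam⁻¹ * L x - (mr - gx) * (lam * lam⁻¹) := by ring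
    rw [h3, hlc, mul_one] at h2
    linarith
  -- lower bounds: conjugates not ⊥
  have hFlb : ((Y x₀ - fr₀ : ℝ) : EReal) ≤ eConj f Y := by
    have := le_iSup (fun x => ((Y x : ℝ) : EReal) - f x) x₀
    rwa [hfr₀, ← EReal.coe_sub] at this
  have hGlb : (((-Y) x₀ - gr₀ : ℝ) : EReal) ≤ eConj g (-Y) := by
    have := le_iSup (fun x => (((-Y) x : ℝ) : EReal) - g x) x₀
    rwa [hgr₀, ← EReal.coe_sub] at this
  have hFt : eConj f Y ≠ ⊤ := ne_top_of_le_ne_top (EReal.coe_ne_top _) hF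
  have hGt : eConj g (-Y) ≠ ⊤ := ne_top_of_le_ne_top (EReal.coe_ne_top _) hG
  have hFb : eConj f Y ≠ ⊥ := fun h => by
    rw [h] at hFlb; exact EReal.coe_ne_bot _ (le_bot_iff.1 hFlb)
  have hGb : eConj g (-Y) ≠ ⊥ := fun h => by
    rw [h] at hGlb; exact EReal.coe_ne_bot _ (le_bot_iff.1 hGlb)
  obtain ⟨ar, har⟩ : ∃ r : ℝ, eConj f Y = (r : EReal) := ⟨_, (EReal.coe_toReal hFt hFb).symm⟩
  obtain ⟨br, hbr⟩ : ∃ r : ℝ, eConj g (-Y) = (r : EReal) := ⟨_, (EReal.coe_toReal hGt hGb).symm⟩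
  rw [har, EReal.coe_le_coe_iff] at hF
  rw [hbr, EReal.coe_le_coe_iff] at hG
  have hmain : -(eConj f (-(-Y))) - eConj g (-Y) = m := by
    refine le_antisymm (hWD (-Y)) ?_
    rw [neg_neg, har, hbr, hmr]
    have : mr ≤ -ar - br := by linarith
    exact_mod_cast this
  refine ⟨le_antisymm ?_ (iSup_le hWD), -Y, hmain⟩
  calc m = -(eConj f (-(-Y))) - eConj g (-Y) := hmain.symm
    _ ≤ ⨆ y : E →L[ℝ] ℝ, -(eConj f (-y)) - eConj g y :=
        le_iSup (fun y => -(eConj f (-y)) - eConj g y) (-Y)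
end

section
/- Let $(\vartheta^\epsilon)_{\epsilon>0}$ be functions on $[0,T]$ of the form $\vartheta^\epsilon = \vartheta^\epsilon_\infty + \epsilon\vartheta^\epsilon_1$ with $\|\vartheta^\epsilon_\infty\|_{L^\infty} \leq C'$ and $\|\vartheta^\epsilon_1\|_{L^1} \leq C'$ uniformly in $\epsilon$, and let $\varpi^\epsilon \in W^{1,1}([0,T])$ with $\dot\varpi^\epsilon = \vartheta^\epsilon$ and $\varpi^\epsilon \to \varpi$ uniformly on $[0,T]$. Then $\varpi \in W^{1,\infty}([0,T])$; equivalently, $\varpi$ is Lipschitz continuous with constant at most $C'$. -/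
open MeasureTheory intervalIntegral Filter

/-- Abstract compactness lemma for the Lipschitz regularity of the price:
if `ϖ̇^ε = ϑ^ε_∞ + ε ϑ^ε_1` with `‖ϑ^ε_∞‖_{L^∞} ≤ C'` and `‖ϑ^ε_1‖_{L¹} ≤ C'`
uniformly in `ε`, and `ϖ^ε → ϖ` uniformly on `[0,T]` as `ε → 0⁺`, then `ϖ` is
Lipschitz on `[0,T]` with constant at most `C'`. -/
theorem stmt17 (T C' : ℝ) (hT : 0 < T) (hC' : 0 ≤ C')
    (ϑinf ϑ1 : ℝ → ℝ → ℝ) (ϖe : ℝ → ℝ → ℝ) (ϖ : ℝ → ℝ)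
    (hboundInf : ∀ ε ∈ Set.Ioo (0:ℝ) 1, ∀ t ∈ Set.Icc (0:ℝ) T, |ϑinf ε t| ≤ C')
    (hint1 : ∀ ε ∈ Set.Ioo (0:ℝ) 1, IntervalIntegrable (ϑ1 ε) volume 0 T)
    (hintInf : ∀ ε ∈ Set.Ioo (0:ℝ) 1, IntervalIntegrable (ϑinf ε) volume 0 T)
    (hbound1 : ∀ ε ∈ Set.Ioo (0:ℝ) 1, (∫ t in (0:ℝ)..T, |ϑ1 ε t|) ≤ C')
    (hW11 : ∀ ε ∈ Set.Ioo (0:ℝ) 1, ∀ t ∈ Set.Icc (0:ℝ) T,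
      ϖe ε t = ϖe ε 0 + ∫ s in (0:ℝ)..t, (ϑinf ε s + ε * ϑ1 ε s))
    (hconv : TendstoUniformlyOn ϖe ϖ (nhdsWithin 0 (Set.Ioi 0)) (Set.Icc 0 T)) :
    LipschitzOnWith (Real.toNNReal C') ϖ (Set.Icc 0 T) := by
  rw [lipschitzOnWith_iff_dist_le_mul]
  have key : ∀ x ∈ Set.Icc (0:ℝ) T, ∀ y ∈ Set.Icc (0:ℝ) T, y ≤ x →
      dist (ϖ x) (ϖ y) ≤ C' * dist x y := by
    intro x hx y hy hxy
    apply le_of_forall_pos_le_add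
    intro δ hδ
    -- choose ε small
    have h1 : ∀ᶠ ε in nhdsWithin 0 (Set.Ioi 0),
        ∀ z ∈ Set.Icc (0:ℝ) T, dist (ϖ z) (ϖe ε z) < δ/4 :=
      (Metric.tendstoUniformlyOn_iff.mp hconv) (δ/4) (by linarith)
    have h2 : ∀ᶠ ε in nhdsWithin 0 (Set.Ioi 0),
        ε ∈ Set.Ioo (0:ℝ) (min 1 (δ/(2*(C'+1)))) := by
      have h3 : Set.Ioo (0:ℝ) (min 1 (δ/(2*(C'+1)))) ∈ nhdsWithin 0 (Set.Ioi 0) := by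
        apply Ioo_mem_nhdsGT_of_mem
        refine ⟨le_refl 0, lt_min one_pos (by positivity)⟩
      exact eventually_mem_set.mpr h3
    obtain ⟨ε, hεu, hεmem⟩ := (h1.and h2).exists
    obtain ⟨hε0, hεlt⟩ := hεmem
    have hε1 : ε ∈ Set.Ioo (0:ℝ) 1 :=
      ⟨hε0, lt_of_lt_of_le hεlt (min_le_left _ _)⟩
    have hεδ : ε < δ/(2*(C'+1)) := lt_of_lt_of_le hεlt (min_le_right _ _)
    have hεδ' : ε * (2*(C'+1)) < δ := by
      rw [← lt_div_iff₀ (by positivity)]; exact hεδ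
    -- the derivative on the subinterval
    set f : ℝ → ℝ := fun s => ϑinf ε s + ε * ϑ1 ε s with hf
    have hsub : ∀ z ∈ Set.Icc (0:ℝ) T, Set.uIcc (0:ℝ) z ⊆ Set.uIcc (0:ℝ) T := by
      intro z hz
      rw [Set.uIcc_of_le hz.1, Set.uIcc_of_le hT.le]
      exact Set.Icc_subset_Icc le_rfl hz.2
    have hsubyx : Set.uIcc y x ⊆ Set.uIcc (0:ℝ) T := by
      rw [Set.uIcc_of_le hxy, Set.uIcc_of_le hT.le]
      exact Set.Icc_subset_Icc hy.1 hx.2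
    have hfintT : IntervalIntegrable f volume 0 T :=
      (hintInf ε hε1).add ((hint1 ε hε1).const_mul ε)
    have hdiff : ϖe ε x - ϖe ε y = ∫ s in y..x, f s := by
      rw [hW11 ε hε1 x hx, hW11 ε hε1 y hy]
      have := integral_interval_sub_left (μ := volume) (f := f) (a := 0) (b := x) (c := y)
        (hfintT.mono_set (hsub x hx)) (hfintT.mono_set (hsub y hy))
      simp only [hf] at this ⊢
      linarith [this]
    have hsplit : (∫ s in y..x, f s) =
        (∫ s in y..x, ϑinf ε s) + ε * ∫ s in y..x, ϑ1 ε s := by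
      rw [hf, integral_add ((hintInf ε hε1).mono_set hsubyx)
        (((hint1 ε hε1).const_mul ε).mono_set hsubyx), intervalIntegral.integral_const_mul]
    have hA : |∫ s in y..x, ϑinf ε s| ≤ C' * (x - y) := by
      have := intervalIntegral.norm_integral_le_of_norm_le_const
        (C := C') (f := ϑinf ε) (a := y) (b := x) ?_
      · rw [Real.norm_eq_abs] at this
        calc |∫ s in y..x, ϑinf ε s| ≤ C' * |x - y| := this
          _ = C' * (x - y) := by rw [abs_of_nonneg (by linarith)]
      · intro z hz
        rw [Set.uIoc_of_le hxy] at hz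
        exact hboundInf ε hε1 z ⟨le_trans hy.1 hz.1.le, le_trans hz.2 hx.2⟩
    have hB : |∫ s in y..x, ϑ1 ε s| ≤ C' := by
      calc |∫ s in y..x, ϑ1 ε s| ≤ ∫ s in y..x, |ϑ1 ε s| := by
            simpa using intervalIntegral.norm_integral_le_integral_norm (f := ϑ1 ε) hxy
        _ ≤ ∫ s in (0:ℝ)..T, |ϑ1 ε s| := by
            apply intervalIntegral.integral_mono_interval hy.1 hxy hx.2
            · filter_upwards with s using abs_nonneg _
            · simpa using (hint1 ε hε1).norm
        _ ≤ C' := hbound1 ε hε1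
    have hde : dist (ϖe ε x) (ϖe ε y) ≤ C' * (x - y) + ε * C' := by
      rw [Real.dist_eq, hdiff, hsplit]
      calc |(∫ s in y..x, ϑinf ε s) + ε * ∫ s in y..x, ϑ1 ε s|
          ≤ |∫ s in y..x, ϑinf ε s| + |ε * ∫ s in y..x, ϑ1 ε s| := abs_add_le _ _
        _ ≤ C' * (x - y) + ε * C' := by
            rw [abs_mul, abs_of_pos hε0]
            exact add_le_add hA (mul_le_mul_of_nonneg_left hB hε0.le)
    have hdist : dist x y = x - y := by
      rw [Real.dist_eq, abs_of_nonneg (by linarith)]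
    have hεC : ε * C' ≤ δ/2 := by nlinarith
    calc dist (ϖ x) (ϖ y)
        ≤ dist (ϖ x) (ϖe ε x) + dist (ϖe ε x) (ϖe ε y) + dist (ϖe ε y) (ϖ y) :=
          dist_triangle4 _ _ _ _
      _ ≤ δ/4 + (C' * (x - y) + ε * C') + δ/4 := by
          refine add_le_add (add_le_add (hεu x hx).le hde) ?_
          rw [dist_comm]; exact (hεu y hy).le
      _ ≤ C' * dist x y + δ := by rw [hdist]; linarith
  have hco : (C'.toNNReal : ℝ) = C' := Real.coe_toNNReal C' hC'
  intro x hx y hy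
  rw [hco]
  rcases le_total y x with h | h
  · exact key x hx y hy h
  · rw [dist_comm (ϖ x), dist_comm x y]
    exact key y hy x hx h
end
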